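/- Let R be an integral domain and let H := αY − f(Z,T) − h(Z,T) ∈ R[Y,Z,T] be an irreducible polynomial, where α ∈ R is a product of prime elements of R and every prime factor of α divides h in R[Y,Z,T]. If R[Z,T] = R[f][g] is a polynomial ring in one variable over R[f] (i.e. f is a coordinate of R[Z,T] over R), then R[Y,Z,T] is a polynomial ring in two variables over R[H], i.e. R[Y,Z,T] = R[H]^[2]. -/

import Mathlib

noncomputable section
open MvPolynomial

/-- The embedding `R[Z,T] → R[Y,Z,T]` sending the two variables `Z, T` to the
last two variables (variable `0` of `Fin 3` is `Y`). -/
def embZT (R : Type) [CommRing R] : MvPolynomial (Fin 2) R →ₐ[R] MvPolynomial (Fin 3) R :=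
  rename Fin.succ

namespace Stmt0Aux

/-- surjective endo of a noetherian comm ring is injective -/
theorem noeth_inj {A : Type*} [CommRing A] [IsNoetherianRing A] (f : A →+* A)
    (hs : Function.Surjective f) : Function.Injective f := by
  let g : ℕ → (A →+* A) := fun n => Nat.rec (RingHom.id A) (fun _ ih => f.comp ih) n
  have hgs : ∀ n, g (n+1) = f.comp (g n) := fun n => rfl
  have hgsurj : ∀ n, Function.Surjective (g n) := by
    intro n; induction n with
    | zero => exact Function.surjective_id
    | succ n ih => exact hs.comp ih
  have hmono : Monotone (fun n => RingHom.ker (g n)) := by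
    apply monotone_nat_of_le_succ
    intro n x hx
    simp only [RingHom.mem_ker] at hx ⊢
    rw [hgs n, RingHom.comp_apply, hx, map_zero]
  obtain ⟨n, hn⟩ := monotone_stabilizes_iff_noetherian.mpr (inferInstance : IsNoetherian A A)
    ⟨fun n => RingHom.ker (g n), hmono⟩
  rw [RingHom.injective_iff_ker_eq_bot]
  rw [eq_bot_iff]
  intro a ha
  rw [RingHom.mem_ker] at ha
  obtain ⟨b, hb⟩ := hgsurj n a
  have hb2 : b ∈ RingHom.ker (g (n+1)) := by
    rw [RingHom.mem_ker, hgs, RingHom.comp_apply, hb, ha]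
  have := hn (n+1) (Nat.le_succ n)
  simp only [OrderHom.coe_mk] at this
  rw [← this] at hb2
  rw [RingHom.mem_ker] at hb2
  exact Ideal.mem_bot.mpr (by rw [← hb, hb2])

variable {R : Type} [CommRing R]

/-- aeval at elements of a subalgebra lands in the subalgebra -/
theorem aeval_mem {B : Type*} [CommRing B] [Algebra R B] (S : Subalgebra R B)
    {n : ℕ} (q : MvPolynomial (Fin n) R) (g : Fin n → B) (hg : ∀ i, g i ∈ S) :
    aeval g q ∈ S := by
  induction q using MvPolynomial.induction_on with
  | C a => simpa using S.algebraMap_mem a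
  | add p q hp hq => rw [map_add]; exact S.add_mem hp hq
  | mul_X p i hp => rw [map_mul, aeval_X]; exact S.mul_mem hp (hg i)

theorem aeval_aeval {B : Type*} [CommRing B] [Algebra R B] {n m : ℕ}
    (f : Fin n → MvPolynomial (Fin m) R) (g : Fin m → B) (q : MvPolynomial (Fin n) R) :
    aeval g (aeval f q) = aeval (fun i => aeval g (f i)) q := by
  rw [← comp_aeval, AlgHom.comp_apply]

/-- difference divisibility for 2-variable polynomials, in the first variable -/
theorem diff_dvd {B : Type*} [CommRing B] [Algebra R B]
    (q : MvPolynomial (Fin 2) R) (u v t : B) :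
    (u - v) ∣ (aeval ![u, t] q - aeval ![v, t] q) := by
  let φ : MvPolynomial (Fin 2) R →ₐ[R] Polynomial B := aeval ![Polynomial.X, Polynomial.C t]
  have key : ∀ w : B, Polynomial.eval w (φ q) = aeval ![w, t] q := by
    intro w
    have hcomp : ((Polynomial.aeval w : Polynomial B →ₐ[B] B).restrictScalars R).comp φ
        = aeval ![w, t] := by
      apply algHom_ext
      intro i
      fin_cases i <;> simp [φ]
    have := congrArg (fun ψ => ψ q) hcomp
    simp only [AlgHom.comp_apply, AlgHom.restrictScalars_apply, Polynomial.coe_aeval_eq_eval] at this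
    exact this
  rw [← key u, ← key v]
  exact Polynomial.sub_dvd_eval_sub u v (φ q)

variable [IsDomain R]

theorem extract (s : Multiset R) (hs : ∀ p ∈ s, Prime p)
    (h : MvPolynomial (Fin 2) R)
    (hdiv : ∀ p : R, Prime p → p ∣ s.prod → (C p : MvPolynomial (Fin 2) R) ∣ h) :
    ∃ (r : R) (M : ℕ), s.prod ∣ r ^ (M + 1) ∧ (C r : MvPolynomial (Fin 2) R) ∣ h := by
  induction s using Multiset.induction_on with
  | empty => exact ⟨1, 0, by simp, one_dvd h⟩
  | cons p t ih =>
      have hp : Prime p := hs p (Multiset.mem_cons_self p t)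
      obtain ⟨r, M, hdvd, hCr⟩ := ih (fun q hq => hs q (Multiset.mem_cons_of_mem hq))
        (fun q hq hq' => hdiv q hq (by rw [Multiset.prod_cons]; exact hq'.mul_left p))
      rw [Multiset.prod_cons]
      by_cases hpr : p ∣ r
      · exact ⟨r, M + 1, by
          calc p * t.prod ∣ r * r ^ (M+1) := mul_dvd_mul hpr hdvd
            _ = r ^ (M+2) := by ring, hCr⟩
      · have hCp : (C p : MvPolynomial (Fin 2) R) ∣ h :=
          hdiv p hp (by rw [Multiset.prod_cons]; exact dvd_mul_right p t.prod)
        obtain ⟨k, hk⟩ := hCr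
        have hprime : Prime (C p : MvPolynomial (Fin 2) R) := (MvPolynomial.prime_C_iff (Fin 2)).mpr hp
        rcases hprime.2.2 (C r) k (hk ▸ hCp) with hc | hc
        · exfalso
          obtain ⟨m, hm⟩ := hc
          exact hpr ⟨constantCoeff m, by
            have := congrArg constantCoeff hm
            simpa using this⟩
        · obtain ⟨k', hk'⟩ := hc
          refine ⟨p * r, M + 1, ?_, ⟨k', by rw [hk, hk', map_mul]; ring⟩⟩
          calc p * t.prod ∣ p ^ (M+2) * r ^ (M+1) :=
                mul_dvd_mul (dvd_pow_self p (by omega)) hdvd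
            _ ∣ p ^ (M+2) * r ^ (M+2) := mul_dvd_mul_left _ (pow_dvd_pow r (by omega))
            _ = (p * r) ^ (M+2) := by ring

def Wp (α r : R) (h₁ : MvPolynomial (Fin 2) R) : MvPolynomial (Fin 3) R :=
  X 1 + C r * aeval ![X 1, X 2] h₁ - C α * X 0

def zeta (α r : R) (h₁ : MvPolynomial (Fin 2) R) : ℕ → MvPolynomial (Fin 3) R
  | 0 => Wp α r h₁
  | k+1 => Wp α r h₁ - C r * aeval ![zeta α r h₁ k, X 2] h₁

def Uc (α r : R) (h₁ : MvPolynomial (Fin 2) R) (D : MvPolynomial (Fin 3) R) :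
    ℕ → MvPolynomial (Fin 3) R
  | 0 => 1
  | k+1 => 1 - C r * (aeval ![X 1, zeta α r h₁ k, X 2] D * Uc α r h₁ D k)

def Vc (α r : R) (h₁ : MvPolynomial (Fin 2) R) (D : MvPolynomial (Fin 3) R) :
    ℕ → MvPolynomial (Fin 3) R
  | 0 => -(aeval ![X 1, X 2] h₁)
  | k+1 => -(aeval ![X 1, zeta α r h₁ k, X 2] D) * Vc α r h₁ D k

theorem key (α r : R) (h₁ : MvPolynomial (Fin 2) R) (D : MvPolynomial (Fin 3) R)
    (hD : ∀ u v t : MvPolynomial (Fin 3) R,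
      aeval ![u, t] h₁ - aeval ![v, t] h₁ = (u - v) * aeval ![u, v, t] D) :
    ∀ k, (X 1 : MvPolynomial (Fin 3) R) - zeta α r h₁ k
      = C α * X 0 * Uc α r h₁ D k + C r * (C r) ^ k * Vc α r h₁ D k := by
  intro k
  induction k with
  | zero =>
      simp only [zeta, Uc, Vc, Wp]
      ring
  | succ k ih =>
      have hdq := hD (X 1) (zeta α r h₁ k) (X 2)
      simp only [zeta, Uc, Vc, Wp] at ih ⊢
      linear_combination (- C r * aeval ![X 1, zeta α r h₁ k, X 2] D) * ih
        + (- C r) * hdq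

theorem endo_bijective {R : Type} [CommRing R] [IsDomain R] {n : ℕ}
    (e : MvPolynomial (Fin n) R →ₐ[R] MvPolynomial (Fin n) R)
    (hs : Function.Surjective e) : Function.Bijective e := by
  refine ⟨?_, hs⟩
  set K := FractionRing R
  let mp : MvPolynomial (Fin n) R →+* MvPolynomial (Fin n) K :=
    MvPolynomial.map (algebraMap R K)
  have hmpinj : Function.Injective mp :=
    MvPolynomial.map_injective _ (IsFractionRing.injective R K)
  let eK : MvPolynomial (Fin n) K →ₐ[K] MvPolynomial (Fin n) K :=
    aeval (fun i => mp (e (X i)))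
  have hcomm : ∀ b, eK (mp b) = mp (e b) := by
    intro b
    induction b using MvPolynomial.induction_on with
    | C a =>
        have h1 : e (C a) = C a := by
          simpa [MvPolynomial.algebraMap_eq] using e.commutes a
        simp [mp, h1, MvPolynomial.map_C, eK, MvPolynomial.algebraMap_eq]
    | add p q hp hq => simp [map_add, hp, hq]
    | mul_X p i hp =>
        have h2 : mp (X i) = X i := MvPolynomial.map_X _ i
        calc eK (mp (p * X i)) = eK (mp p) * eK (mp (X i)) := by rw [map_mul, map_mul]
          _ = mp (e p) * eK (X i) := by rw [hp, h2]
          _ = mp (e p) * mp (e (X i)) := by rw [aeval_X]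
          _ = mp (e (p * X i)) := by rw [← map_mul, ← map_mul]
  have hXrange : ∀ i, X i ∈ eK.range := by
    intro i
    obtain ⟨b, hb⟩ := hs (X i)
    exact ⟨mp b, by show eK (mp b) = X i; rw [hcomm, hb]; exact MvPolynomial.map_X _ i⟩
  have hKsurj : Function.Surjective eK := by
    have htop : eK.range = ⊤ := by
      rw [eq_top_iff, ← MvPolynomial.adjoin_range_X]
      apply Algebra.adjoin_le
      rintro _ ⟨i, rfl⟩
      exact hXrange i
    intro x
    have : x ∈ eK.range := htop ▸ Algebra.mem_top
    exact this
  have hKinj : Function.Injective eK := Stmt0Aux.noeth_inj eK.toRingHom hKsurj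
  intro a b hab
  apply hmpinj
  apply hKinj
  rw [hcomm, hcomm, hab]


theorem embZT_eq (q : MvPolynomial (Fin 2) R) :
    embZT R q = aeval ![X 1, X 2] q := by
  have h : (embZT R : MvPolynomial (Fin 2) R →ₐ[R] MvPolynomial (Fin 3) R)
      = aeval ![X 1, X 2] := by
    apply algHom_ext
    intro i
    fin_cases i <;> simp [embZT] <;> rfl
  rw [h]

theorem mainM (α r c : R) (M : ℕ) (hrc : r ^ (M + 1) = α * c)
    (h₁ : MvPolynomial (Fin 2) R) :
    ∃ e : MvPolynomial (Fin 3) R ≃ₐ[R] MvPolynomial (Fin 3) R,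
      e (X 0) = C α * X 0 - X 1 - C r * aeval ![X 1, X 2] h₁ := by
  classical
  -- the universal difference quotient
  obtain ⟨D, hD0⟩ := diff_dvd (B := MvPolynomial (Fin 3) R) h₁ (X 0) (X 1) (X 2)
  have hD : ∀ u v t : MvPolynomial (Fin 3) R,
      aeval ![u, t] h₁ - aeval ![v, t] h₁ = (u - v) * aeval ![u, v, t] D := by
    intro u v t
    have hmap := congrArg (aeval ![u, v, t]) hD0
    have L1 : aeval ![u, v, t] (aeval ![(X 0 : MvPolynomial (Fin 3) R), X 2] h₁)
        = aeval ![u, t] h₁ := by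
      have hf : (fun i => aeval ![u, v, t] (![(X 0 : MvPolynomial (Fin 3) R), X 2] i))
          = ![u, t] := by funext i; fin_cases i <;> simp
      rw [aeval_aeval, hf]
    have L2 : aeval ![u, v, t] (aeval ![(X 1 : MvPolynomial (Fin 3) R), X 2] h₁)
        = aeval ![v, t] h₁ := by
      have hf : (fun i => aeval ![u, v, t] (![(X 1 : MvPolynomial (Fin 3) R), X 2] i))
          = ![v, t] := by funext i; fin_cases i <;> simp
      rw [aeval_aeval, hf]
    have L3 : aeval ![u, v, t] (((X 0 : MvPolynomial (Fin 3) R) - X 1) * D)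
        = (u - v) * aeval ![u, v, t] D := by
      rw [map_mul, map_sub]; simp
    rw [map_sub, L1, L2, L3] at hmap
    exact hmap
  set G : MvPolynomial (Fin 3) R
    := C α * X 0 - X 1 - C r * aeval ![X 1, X 2] h₁ with hG
  set Y₁ : MvPolynomial (Fin 3) R
    := X 0 * Uc α r h₁ D (M+1) + C (c * r) * Vc α r h₁ D (M+1) with hY₁
  set e₀ : MvPolynomial (Fin 3) R →ₐ[R] MvPolynomial (Fin 3) R
    := aeval ![G, Y₁, X 2] with he₀
  set S := e₀.range with hS
  have hCmem : ∀ a : R, (C a : MvPolynomial (Fin 3) R) ∈ S := fun a => by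
    rw [← MvPolynomial.algebraMap_eq]; exact S.algebraMap_mem a
  have hGmem : G ∈ S := ⟨X 0, by simp [he₀]⟩
  have hY₁mem : Y₁ ∈ S := ⟨X 1, by simp [he₀]⟩
  have hTmem : (X 2 : MvPolynomial (Fin 3) R) ∈ S := ⟨X 2, by simp [he₀]⟩
  have hWmem : Wp α r h₁ ∈ S := by
    have hw : Wp α r h₁ = -G := by simp only [Wp, hG]; ring
    rw [hw]; exact S.neg_mem hGmem
  have hzeta : ∀ k, zeta α r h₁ k ∈ S := by
    intro k; induction k with
    | zero => exact hWmem
    | succ k ih =>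
        show Wp α r h₁ - C r * aeval ![zeta α r h₁ k, X 2] h₁ ∈ S
        refine S.sub_mem hWmem (S.mul_mem (hCmem r) (aeval_mem S h₁ _ ?_))
        intro i; fin_cases i
        · simpa using ih
        · simpa using hTmem
  have hkeyN := key α r h₁ D hD (M+1)
  have hCrpow : (C r : MvPolynomial (Fin 3) R) * (C r) ^ (M+1) = C α * C (c * r) := by
    have h1 : r * r ^ (M+1) = α * (c * r) := by rw [hrc]; ring
    rw [← map_pow, ← map_mul, h1, map_mul]
  have hZeq : (X 1 : MvPolynomial (Fin 3) R) = zeta α r h₁ (M+1) + C α * Y₁ := by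
    rw [hY₁]
    linear_combination hkeyN + Vc α r h₁ D (M+1) * hCrpow
  have hZmem : (X 1 : MvPolynomial (Fin 3) R) ∈ S := by
    rw [hZeq]
    exact S.add_mem (hzeta (M+1)) (S.mul_mem (hCmem α) hY₁mem)
  have hη₁ : aeval ![(X 1 : MvPolynomial (Fin 3) R), X 2] h₁ ∈ S := by
    refine aeval_mem S h₁ _ ?_
    intro i; fin_cases i
    · simpa using hZmem
    · simpa using hTmem
  have hDel : ∀ k, aeval ![(X 1 : MvPolynomial (Fin 3) R), zeta α r h₁ k, X 2] D ∈ S := by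
    intro k
    refine aeval_mem S D _ ?_
    intro i; fin_cases i
    · simpa using hZmem
    · simpa using hzeta k
    · simpa using hTmem
  have hU : ∀ k, Uc α r h₁ D k ∈ S := by
    intro k; induction k with
    | zero => exact S.one_mem
    | succ k ih =>
        show (1 : MvPolynomial (Fin 3) R)
          - C r * (aeval ![X 1, zeta α r h₁ k, X 2] D * Uc α r h₁ D k) ∈ S
        exact S.sub_mem S.one_mem (S.mul_mem (hCmem r) (S.mul_mem (hDel k) ih))
  have hV : ∀ k, Vc α r h₁ D k ∈ S := by
    intro k; induction k with
    | zero => exact S.neg_mem hη₁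
    | succ k ih =>
        show -(aeval ![(X 1 : MvPolynomial (Fin 3) R), zeta α r h₁ k, X 2] D)
          * Vc α r h₁ D k ∈ S
        exact S.mul_mem (S.neg_mem (hDel k)) ih
  have hCαY : (C α : MvPolynomial (Fin 3) R) * X 0 ∈ S := by
    have h2 : (C α : MvPolynomial (Fin 3) R) * X 0
        = G + X 1 + C r * aeval ![X 1, X 2] h₁ := by rw [hG]; ring
    rw [h2]
    exact S.add_mem (S.add_mem hGmem hZmem) (S.mul_mem (hCmem r) hη₁)
  have hYU : (X 0 : MvPolynomial (Fin 3) R) * Uc α r h₁ D (M+1) ∈ S := by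
    have h3 : (X 0 : MvPolynomial (Fin 3) R) * Uc α r h₁ D (M+1)
        = Y₁ - C (c * r) * Vc α r h₁ D (M+1) := by rw [hY₁]; ring
    rw [h3]
    exact S.sub_mem hY₁mem (S.mul_mem (hCmem _) (hV _))
  set t : MvPolynomial (Fin 3) R
    := aeval ![X 1, zeta α r h₁ M, X 2] D * Uc α r h₁ D M with htdef
  have htS : t ∈ S := S.mul_mem (hDel M) (hU M)
  have hUN : Uc α r h₁ D (M+1) = 1 - C r * t := rfl
  have hPS : (∑ i ∈ Finset.range (M+1), ((C r : MvPolynomial (Fin 3) R) * t) ^ i) ∈ S :=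
    S.sum_mem (fun i _ => S.pow_mem (S.mul_mem (hCmem r) htS) i)
  have hgeom := geom_sum_mul ((C r : MvPolynomial (Fin 3) R) * t) (M+1)
  have hCpow : (C r : MvPolynomial (Fin 3) R) ^ (M+1) = C α * C c := by
    rw [← map_pow, hrc, map_mul]
  have hX0eq : (X 0 : MvPolynomial (Fin 3) R)
      = (X 0 * Uc α r h₁ D (M+1)) * (∑ i ∈ Finset.range (M+1), ((C r : MvPolynomial (Fin 3) R) * t) ^ i)
        + (C α * X 0) * (C c * t ^ (M+1)) := by
    rw [hUN]
    linear_combination (X 0 : MvPolynomial (Fin 3) R) * hgeom + X 0 * t ^ (M+1) * hCpow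
  have hX0S : (X 0 : MvPolynomial (Fin 3) R) ∈ S := by
    rw [hX0eq]
    exact S.add_mem (S.mul_mem hYU hPS)
      (S.mul_mem hCαY (S.mul_mem (hCmem c) (S.pow_mem htS _)))
  have hsurj : Function.Surjective e₀ := by
    have htop : S = ⊤ := by
      rw [eq_top_iff, ← MvPolynomial.adjoin_range_X]
      apply Algebra.adjoin_le
      rintro _ ⟨i, rfl⟩
      fin_cases i
      · exact hX0S
      · exact hZmem
      · exact hTmem
    intro x
    exact (htop ▸ Algebra.mem_top : x ∈ S)
  have hbij := endo_bijective e₀ hsurj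
  refine ⟨AlgEquiv.ofBijective e₀ hbij, ?_⟩
  show e₀ (X 0) = _
  simp [he₀]


def ext3 (δ : MvPolynomial (Fin 2) R →ₐ[R] MvPolynomial (Fin 2) R) :
    MvPolynomial (Fin 3) R →ₐ[R] MvPolynomial (Fin 3) R :=
  aeval (Fin.cases (X 0) (fun i => embZT R (δ (X i))))

theorem ext3_X0 (δ : MvPolynomial (Fin 2) R →ₐ[R] MvPolynomial (Fin 2) R) :
    ext3 δ (X 0) = X 0 := by simp [ext3]

theorem ext3_X1 (δ : MvPolynomial (Fin 2) R →ₐ[R] MvPolynomial (Fin 2) R) :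
    ext3 δ (X 1) = embZT R (δ (X 0)) := by
  have h2 : ext3 δ (X (Fin.succ 0)) = embZT R (δ (X 0)) := by
    simp only [ext3, aeval_X, Fin.cases_succ]
  exact h2

theorem ext3_emb (δ : MvPolynomial (Fin 2) R →ₐ[R] MvPolynomial (Fin 2) R)
    (q : MvPolynomial (Fin 2) R) : ext3 δ (embZT R q) = embZT R (δ q) := by
  have h : (ext3 δ).comp (embZT R) = (embZT R).comp δ := by
    apply algHom_ext
    intro i
    simp [ext3, embZT, AlgHom.comp_apply]
  exact DFunLike.congr_fun h q

theorem ext3_comp (δ δ' : MvPolynomial (Fin 2) R →ₐ[R] MvPolynomial (Fin 2) R) :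
    (ext3 δ).comp (ext3 δ') = ext3 (δ.comp δ') := by
  apply algHom_ext
  intro i
  refine Fin.cases ?_ ?_ i
  · simp [ext3, AlgHom.comp_apply]
  · intro j
    rw [AlgHom.comp_apply]
    rw [show (ext3 δ') (X j.succ) = embZT R (δ' (X j)) from by
      simp only [ext3, aeval_X, Fin.cases_succ]]
    rw [ext3_emb]
    rw [show (ext3 (δ.comp δ')) (X j.succ) = embZT R ((δ.comp δ') (X j)) from by
      simp only [ext3, aeval_X, Fin.cases_succ]]
    rfl

theorem ext3_id : ext3 (AlgHom.id R (MvPolynomial (Fin 2) R))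
    = AlgHom.id R (MvPolynomial (Fin 3) R) := by
  apply algHom_ext
  intro i
  refine Fin.cases ?_ ?_ i
  · simp [ext3]
  · intro j
    simp [ext3, embZT]

def ext3e (δ : MvPolynomial (Fin 2) R ≃ₐ[R] MvPolynomial (Fin 2) R) :
    MvPolynomial (Fin 3) R ≃ₐ[R] MvPolynomial (Fin 3) R :=
  AlgEquiv.ofAlgHom (ext3 δ.toAlgHom) (ext3 δ.symm.toAlgHom)
    (by
      rw [ext3_comp]
      rw [show δ.toAlgHom.comp δ.symm.toAlgHom = AlgHom.id R _ from by ext x; simp]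
      exact ext3_id)
    (by
      rw [ext3_comp]
      rw [show δ.symm.toAlgHom.comp δ.toAlgHom = AlgHom.id R _ from by ext x; simp]
      exact ext3_id)

end Stmt0Aux

open Stmt0Aux

/-- Lemma 2.6, Russell–Sathaye application.
If `H = αY - f(Z,T) - h(Z,T)` is irreducible, `α` is a product of primes of `R`,
every prime factor of `α` divides `h`, and `f` is a coordinate of `R[Z,T]` over `R`,
then `R[Y,Z,T] = R[H]^[2]`, i.e. `H` is a coordinate of `R[Y,Z,T]` over `R`. -/
theorem stmt0 (R : Type) [CommRing R] [IsDomain R]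
    (α : R) (f h : MvPolynomial (Fin 2) R)
    (hα : ∃ s : Multiset R, (∀ p ∈ s, Prime p) ∧ s.prod = α)
    (hdiv : ∀ p : R, Prime p → p ∣ α → (MvPolynomial.C p : MvPolynomial (Fin 2) R) ∣ h)
    (H : MvPolynomial (Fin 3) R)
    (hH : H = MvPolynomial.C α * MvPolynomial.X 0 - embZT R f - embZT R h)
    (hirr : Irreducible H)
    (hcoord : ∃ e : MvPolynomial (Fin 2) R ≃ₐ[R] MvPolynomial (Fin 2) R,
        e (MvPolynomial.X 0) = f) :
    ∃ e : MvPolynomial (Fin 3) R ≃ₐ[R] MvPolynomial (Fin 3) R,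
        e (MvPolynomial.X 0) = H := by
  obtain ⟨s, hsp, hsprod⟩ := hα
  obtain ⟨ε, hε⟩ := hcoord
  have hdiv' : ∀ p : R, Prime p → p ∣ s.prod →
      (C p : MvPolynomial (Fin 2) R) ∣ ε.symm h := by
    intro p hp hps
    obtain ⟨k, hk⟩ := hdiv p hp (hsprod ▸ hps)
    refine ⟨ε.symm k, ?_⟩
    rw [hk, map_mul]
    congr 1
    simpa [MvPolynomial.algebraMap_eq] using ε.symm.commutes p
  obtain ⟨r, M, hdvd, hCr⟩ := extract s hsp (ε.symm h) hdiv'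
  obtain ⟨c, hc⟩ := hdvd
  obtain ⟨h₁, hh₁⟩ := hCr
  have hrc : r ^ (M + 1) = α * c := by rw [hc, hsprod]
  obtain ⟨e', he'⟩ := mainM α r c M hrc h₁
  refine ⟨e'.trans (ext3e ε), ?_⟩
  have htr : (e'.trans (ext3e ε)) (X 0) = ext3e ε (e' (X 0)) := rfl
  rw [htr, he']
  show ext3 ε.toAlgHom (C α * X 0 - X 1 - C r * aeval ![X 1, X 2] h₁) = H
  have hC : ∀ a : R, ext3 ε.toAlgHom (C a) = (C a : MvPolynomial (Fin 3) R) := by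
    intro a
    simpa [MvPolynomial.algebraMap_eq] using (ext3 ε.toAlgHom).commutes a
  have hemb : ext3 ε.toAlgHom (aeval ![X 1, X 2] h₁) = embZT R (ε h₁) := by
    rw [← embZT_eq, ext3_emb]
    rfl
  rw [map_sub, map_sub, map_mul, map_mul, hC, hC, ext3_X0, ext3_X1, hemb]
  have hεf : (ε.toAlgHom (X 0) : MvPolynomial (Fin 2) R) = f := hε
  rw [hεf]
  have hfinal : (C r : MvPolynomial (Fin 3) R) * embZT R (ε h₁) = embZT R h := by
    have : h = C r * ε h₁ := by
      have h2 := congrArg ε hh₁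
      rw [map_mul] at h2
      rw [AlgEquiv.apply_symm_apply] at h2
      rw [h2]
      congr 1
      simpa [MvPolynomial.algebraMap_eq] using ε.commutes r
    rw [this, map_mul]
    congr 1
    simpa [MvPolynomial.algebraMap_eq] using (embZT R).commutes r
  rw [hfinal, hH]
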